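/- The inverse of Gavrilov's K-map admits the explicit partition formula K⁻¹(y₁⋯yₙ) = Σ_π (y₁⋯yₙ)^π, summing over all set partitions π of {1,…,n}, where for a block B = {b₁<⋯<b_ℓ} one sets y_B := y_{b₁}▷(y_{b₂}▷(⋯▷(y_{b(ℓ−1)}▷y_{b_ℓ})⋯)) and (y₁⋯yₙ)^π := y_{B₁}⋯y_{B_{|π|}} with blocks ordered by increasing maxima. -/

import Mathlib

open TensorProduct TensorAlgebra

variable (k M : Type*) [CommRing k] [AddCommGroup M] [Module k M]

/-- The linear map sending `x ∈ M` to the primitive element `ι x ⊗ 1 + 1 ⊗ ι x`. -/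
noncomputable def primMap : M →ₗ[k] TensorAlgebra k M ⊗[k] TensorAlgebra k M :=
  ((TensorProduct.mk k (TensorAlgebra k M) (TensorAlgebra k M)).flip 1).comp (ι k) +
    (TensorProduct.mk k (TensorAlgebra k M) (TensorAlgebra k M) 1).comp (ι k)

/-- The unshuffle coproduct on the tensor algebra: the unique algebra morphism
`Δ : T(M) → T(M) ⊗ T(M)` for which every element of `M` is primitive. -/
noncomputable def unshuffle :
    TensorAlgebra k M →ₐ[k] TensorAlgebra k M ⊗[k] TensorAlgebra k M :=
  TensorAlgebra.lift k (primMap k M)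

/-- The counit of the tensor algebra: the algebra morphism killing `M`. -/
noncomputable def counit : TensorAlgebra k M →ₐ[k] k :=
  TensorAlgebra.lift k (0 : M →ₗ[k] k)

attribute [local instance] Classical.propDecidable

/-- Right-nested magmatic product over a list:
`nest m y [b₁,…,b_ℓ] = y b₁ ▷ (y b₂ ▷ (⋯ ▷ y b_ℓ))` (and `0` on the empty list). -/
def nest {α N : Type*} [Zero N] (m : N → N → N) (y : α → N) : List α → N
  | [] => 0
  | a :: rest => if rest.isEmpty then y a else m (y a) (nest m y rest)

/-- `π` is a set partition of `{0,…,n−1}`: no empty block, and every element lies in a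
unique block. -/
def IsSetPartition {n : ℕ} (π : Finset (Finset (Fin n))) : Prop :=
  ∅ ∉ π ∧ ∀ i : Fin n, ∃! B, B ∈ π ∧ i ∈ B

/-- The factor contributed at position `i` by the partition `π`: if `i` is the maximum
of some block `B` of `π`, this is `ι(y_B)` where `y_B` is the right-nested `▷`-product
of the `y_b`, `b ∈ B`, in increasing order; otherwise it is `1`. Multiplying these
factors in increasing order of `i` realizes the word `y_{B₁}⋯y_{B_{|π|}}` with blocks
ordered by increasing maxima. -/
noncomputable def partFactor {k M : Type*} [CommRing k] [AddCommGroup M] [Module k M]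
    (m : M →ₗ[k] M →ₗ[k] M) {n : ℕ} (y : Fin n → M)
    (π : Finset (Finset (Fin n))) (i : Fin n) : TensorAlgebra k M :=
  if (π.filter fun B => B.max = (i : WithBot (Fin n))) = ∅ then 1
  else ∑ B ∈ π.filter (fun B => B.max = (i : WithBot (Fin n))),
    ι k (nest (fun a b => m a b) y (B.sort (· ≤ ·)))

/-- The monomial `(y₁⋯yₙ)^π = y_{B₁}⋯y_{B_{|π|}}` associated to a set partition `π`,
with blocks ordered by increasing maxima. -/
noncomputable def partTerm {k M : Type*} [CommRing k] [AddCommGroup M] [Module k M]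
    (m : M →ₗ[k] M →ₗ[k] M) {n : ℕ} (y : Fin n → M)
    (π : Finset (Finset (Fin n))) : TensorAlgebra k M :=
  (((List.finRange n).map (partFactor m y π)).prod)

namespace KinvAux
variable {n : ℕ}
def upB (B : Finset (Fin n)) : Finset (Fin (n+1)) := B.map (Fin.succEmb n)

noncomputable def downB (C : Finset (Fin (n+1))) : Finset (Fin n) :=
  Finset.univ.filter (fun j => j.succ ∈ C)

@[simp] lemma succ_mem_upB {j : Fin n} {B : Finset (Fin n)} : j.succ ∈ upB B ↔ j ∈ B := by
  constructor
  · intro h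
    simp only [upB, Finset.mem_map, Fin.coe_succEmb] at h
    rcases h with ⟨a, ha, h⟩
    rwa [show a = j from Fin.succ_inj.mp h] at ha
  · intro h
    exact Finset.mem_map_of_mem _ h

@[simp] lemma zero_not_mem_upB {B : Finset (Fin n)} : (0 : Fin (n+1)) ∉ upB B := by
  simp only [upB, Finset.mem_map, Fin.coe_succEmb]
  rintro ⟨a, _, h⟩
  exact (Fin.succ_ne_zero a) h

@[simp] lemma mem_downB {j : Fin n} {C : Finset (Fin (n+1))} : j ∈ downB C ↔ j.succ ∈ C := by
  simp [downB]

@[simp] lemma downB_upB (B : Finset (Fin n)) : downB (upB B) = B := by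
  ext j; simp

lemma upB_downB {C : Finset (Fin (n+1))} (h : (0 : Fin (n+1)) ∉ C) : upB (downB C) = C := by
  ext i
  rcases Fin.eq_zero_or_eq_succ i with rfl | ⟨j, rfl⟩
  · constructor
    · intro hi; exact absurd hi (zero_not_mem_upB)
    · intro hi; exact absurd hi h
  · simp

lemma upB_inj : Function.Injective (upB (n := n)) := by
  intro a b h
  rw [← downB_upB a, h, downB_upB]

lemma max_upB (B : Finset (Fin n)) : (upB B).max = B.max.map Fin.succ := by
  rcases B.eq_empty_or_nonempty with rfl | hB
  · simp [upB]
  · have hmem := B.max'_mem hB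
    have h1 : B.max = (B.max' hB : WithBot (Fin n)) := (B.coe_max' hB).symm
    rw [h1]
    simp only [WithBot.map_coe]
    apply le_antisymm
    · rw [Finset.max_eq_sup_coe]
      apply Finset.sup_le
      intro c hc
      rcases Fin.eq_zero_or_eq_succ c with rfl | ⟨j, rfl⟩
      · exact absurd hc zero_not_mem_upB
      · have : j ∈ B := succ_mem_upB.mp hc
        exact_mod_cast WithBot.coe_le_coe.mpr (Fin.succ_le_succ_iff.mpr (B.le_max' _ this))
    · exact Finset.le_max (succ_mem_upB.mpr hmem)

lemma max_upB_eq_succ {B : Finset (Fin n)} {j : Fin n} :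
    (upB B).max = (j.succ : WithBot (Fin (n+1))) ↔ B.max = (j : WithBot (Fin n)) := by
  rw [max_upB]
  cases hb : B.max with
  | bot => simp
  | coe m =>
    simp only [WithBot.map_coe, WithBot.coe_inj]
    exact Fin.succ_inj.trans (by simp)

lemma max_upB_ne_zero (B : Finset (Fin n)) : (upB B).max ≠ ((0 : Fin (n+1)) : WithBot (Fin (n+1))) := by
  rw [max_upB]
  cases hb : B.max with
  | bot => simp
  | coe m =>
    simp only [WithBot.map_coe, ne_eq, WithBot.coe_inj]
    exact Fin.succ_ne_zero m


lemma max_insert' {α : Type*} [LinearOrder α] [DecidableEq α] (a : α) (s : Finset α) :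
    (insert a s).max = max (↑a) s.max := by
  rw [Finset.max_eq_sup_coe, Finset.sup_insert, ← Finset.max_eq_sup_coe]

lemma max_insert_zero {B : Finset (Fin n)} (hB : B.Nonempty) :
    (insert (0 : Fin (n+1)) (upB B)).max = (upB B).max := by
  rw [max_insert']
  obtain ⟨a, ha⟩ := hB
  have : ((0:Fin (n+1)) : WithBot (Fin (n+1))) ≤ (upB B).max :=
    le_trans (by exact_mod_cast WithBot.coe_le_coe.mpr (Fin.zero_le a.succ))
      (Finset.le_max (succ_mem_upB.mpr ha))
  exact max_eq_right this

lemma sort_upB (B : Finset (Fin n)) :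
    (upB B).sort (· ≤ ·) = (B.sort (· ≤ ·)).map Fin.succ := by
  apply List.Perm.eq_of_pairwise' (Finset.pairwise_sort _ _) ?_ ?_
  · exact List.Pairwise.map _ (fun a b h => Fin.succ_le_succ_iff.mpr h) (Finset.pairwise_sort _ _)
  · rw [← Multiset.coe_eq_coe]
    have h1 : ((upB B).sort (· ≤ ·) : Multiset (Fin (n+1))) = (upB B).val := Finset.sort_eq _ _
    have h2 : ((B.sort (· ≤ ·)) : Multiset (Fin n)) = B.val := Finset.sort_eq _ _
    rw [h1, ← Multiset.map_coe, h2]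
    rfl

lemma sort_insert_zero {C : Finset (Fin (n+1))} (h : (0 : Fin (n+1)) ∉ C) :
    (insert (0 : Fin (n+1)) C).sort (· ≤ ·) = 0 :: C.sort (· ≤ ·) :=
  Finset.sort_insert _ (fun b _ => Fin.zero_le b) h

lemma sort_eq_nil_iff (B : Finset (Fin n)) : B.sort (· ≤ ·) = [] ↔ B = ∅ := by
  constructor
  · intro h
    have := Finset.length_sort (s := B) (· ≤ ·)
    rw [h] at this
    exact Finset.card_eq_zero.mp this.symm
  · rintro rfl; exact Finset.sort_empty _

lemma block_eq {π : Finset (Finset (Fin n))} (hπ : IsSetPartition π) {B C : Finset (Fin n)} {i : Fin n}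
    (hB : B ∈ π) (hC : C ∈ π) (hiB : i ∈ B) (hiC : i ∈ C) : B = C := by
  obtain ⟨D, _, hD⟩ := hπ.2 i
  rw [hD B ⟨hB, hiB⟩, hD C ⟨hC, hiC⟩]

lemma nonempty_of_mem {π : Finset (Finset (Fin n))} (hπ : IsSetPartition π) {B : Finset (Fin n)}
    (hB : B ∈ π) : B.Nonempty := by
  rcases B.eq_empty_or_nonempty with rfl | h
  · exact absurd hB hπ.1
  · exact h

def glue0 (π : Finset (Finset (Fin n))) : Finset (Finset (Fin (n+1))) :=
  insert {0} (π.image upB)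

def gmap (B : Finset (Fin n)) (B' : Finset (Fin n)) : Finset (Fin (n+1)) :=
  if B' = B then insert 0 (upB B') else upB B'

def glue2 (π : Finset (Finset (Fin n))) (B : Finset (Fin n)) : Finset (Finset (Fin (n+1))) :=
  π.image (gmap B)

noncomputable def inv0 (π' : Finset (Finset (Fin (n+1)))) : Finset (Finset (Fin n)) :=
  (π'.erase {0}).image downB

@[simp] lemma downB_gmap (B B' : Finset (Fin n)) : downB (gmap B B') = B' := by
  unfold gmap
  split
  · ext j
    simp [Fin.succ_ne_zero]
  · simp

lemma zero_mem_gmap_iff {B B' : Finset (Fin n)} : (0 : Fin (n+1)) ∈ gmap B B' ↔ B' = B := by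
  unfold gmap
  split
  · simp [*]
  · simp [zero_not_mem_upB, *]

lemma succ_mem_gmap_iff {B B' : Finset (Fin n)} {j : Fin n} :
    j.succ ∈ gmap B B' ↔ j ∈ B' := by
  unfold gmap
  split <;> simp [Fin.succ_ne_zero]

lemma max_gmap {B B' : Finset (Fin n)} (hB' : B'.Nonempty) :
    (gmap B B').max = (upB B').max := by
  unfold gmap
  split
  · exact max_insert_zero hB'
  · rfl

lemma glue0_isPart {π : Finset (Finset (Fin n))} (hπ : IsSetPartition π) : IsSetPartition (glue0 π) := by
  constructor
  · intro h
    rcases Finset.mem_insert.mp h with h | h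
    · exact absurd h.symm (Finset.singleton_ne_empty _)
    · obtain ⟨B, hB, hB2⟩ := Finset.mem_image.mp h
      have : B = ∅ := by
        rcases B.eq_empty_or_nonempty with rfl | ⟨a, ha⟩
        · rfl
        · exact absurd (hB2 ▸ succ_mem_upB.mpr ha) (Finset.notMem_empty _)
      exact hπ.1 (this ▸ hB)
  · intro i
    rcases Fin.eq_zero_or_eq_succ i with rfl | ⟨j, rfl⟩
    · refine ⟨{0}, ⟨Finset.mem_insert_self _ _, Finset.mem_singleton_self _⟩, ?_⟩
      rintro C ⟨hC, h0C⟩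
      rcases Finset.mem_insert.mp hC with rfl | hC
      · rfl
      · obtain ⟨B, _, rfl⟩ := Finset.mem_image.mp hC
        exact absurd h0C zero_not_mem_upB
    · obtain ⟨B, ⟨hB, hjB⟩, hBu⟩ := hπ.2 j
      refine ⟨upB B, ⟨Finset.mem_insert_of_mem (Finset.mem_image_of_mem _ hB),
        succ_mem_upB.mpr hjB⟩, ?_⟩
      rintro C ⟨hC, hjC⟩
      rcases Finset.mem_insert.mp hC with rfl | hC
      · exact absurd (Finset.mem_singleton.mp hjC) (Fin.succ_ne_zero j)
      · obtain ⟨B', hB', rfl⟩ := Finset.mem_image.mp hC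
        rw [hBu B' ⟨hB', succ_mem_upB.mp hjC⟩]

lemma glue2_isPart {π : Finset (Finset (Fin n))} (hπ : IsSetPartition π) {B : Finset (Fin n)}
    (hB : B ∈ π) : IsSetPartition (glue2 π B) := by
  constructor
  · intro h
    obtain ⟨B', hB', hB2⟩ := Finset.mem_image.mp h
    have hne : B'.Nonempty := nonempty_of_mem hπ hB'
    obtain ⟨a, ha⟩ := hne
    have : a.succ ∈ gmap B B' := succ_mem_gmap_iff.mpr ha
    rw [hB2] at this
    exact Finset.notMem_empty _ this
  · intro i
    rcases Fin.eq_zero_or_eq_succ i with rfl | ⟨j, rfl⟩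
    · refine ⟨gmap B B, ⟨Finset.mem_image_of_mem _ hB, zero_mem_gmap_iff.mpr rfl⟩, ?_⟩
      rintro C ⟨hC, h0C⟩
      obtain ⟨B', hB', rfl⟩ := Finset.mem_image.mp hC
      rw [zero_mem_gmap_iff.mp h0C]
    · obtain ⟨B', ⟨hB', hjB'⟩, hBu⟩ := hπ.2 j
      refine ⟨gmap B B', ⟨Finset.mem_image_of_mem _ hB', succ_mem_gmap_iff.mpr hjB'⟩, ?_⟩
      rintro C ⟨hC, hjC⟩
      obtain ⟨B'', hB'', rfl⟩ := Finset.mem_image.mp hC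
      rw [hBu B'' ⟨hB'', succ_mem_gmap_iff.mp hjC⟩]

lemma singleton_zero_not_mem_glue2 {π : Finset (Finset (Fin n))} (hπ : IsSetPartition π)
    {B : Finset (Fin n)} (hB : B ∈ π) : ({0} : Finset (Fin (n+1))) ∉ glue2 π B := by
  intro h
  obtain ⟨B', hB', hB2⟩ := Finset.mem_image.mp h
  obtain ⟨a, ha⟩ := nonempty_of_mem hπ hB'
  have : a.succ ∈ gmap B B' := succ_mem_gmap_iff.mpr ha
  rw [hB2] at this
  exact Fin.succ_ne_zero a (Finset.mem_singleton.mp this)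

lemma inv0_glue0 {π : Finset (Finset (Fin n))} : inv0 (glue0 π) = π := by
  unfold inv0 glue0
  have h1 : ({0} : Finset (Fin (n+1))) ∉ π.image upB := by
    intro h
    obtain ⟨B, _, hB2⟩ := Finset.mem_image.mp h
    have : (0 : Fin (n+1)) ∈ upB B := hB2 ▸ Finset.mem_singleton_self _
    exact zero_not_mem_upB this
  rw [Finset.erase_insert h1, Finset.image_image]
  rw [show (downB ∘ upB : Finset (Fin n) → Finset (Fin n)) = id from funext (fun B => downB_upB B),
    Finset.image_id]

lemma glue0_inj : Function.Injective (glue0 (n := n)) := by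
  intro a b h
  rw [← inv0_glue0 (π := a), h, inv0_glue0]

lemma glue0_inv0 {π' : Finset (Finset (Fin (n+1)))} (hπ' : IsSetPartition π') (h0 : {0} ∈ π') :
    glue0 (inv0 π') = π' := by
  have hzero : ∀ C ∈ π'.erase {0}, (0 : Fin (n+1)) ∉ C := by
    intro C hC h0C
    have := block_eq hπ' (Finset.mem_of_mem_erase hC) h0 h0C (Finset.mem_singleton_self _)
    exact (Finset.ne_of_mem_erase hC) this
  unfold glue0 inv0
  rw [Finset.image_image]
  have : ∀ C ∈ π'.erase {0}, (upB ∘ downB) C = C := fun C hC => upB_downB (hzero C hC)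
  rw [Finset.image_congr (fun C hC => this C hC), Finset.image_id', Finset.insert_erase h0]

lemma inv0_isPart {π' : Finset (Finset (Fin (n+1)))} (hπ' : IsSetPartition π') (h0 : {0} ∈ π') :
    IsSetPartition (inv0 π') := by
  have hzero : ∀ C ∈ π'.erase {0}, (0 : Fin (n+1)) ∉ C := by
    intro C hC h0C
    have := block_eq hπ' (Finset.mem_of_mem_erase hC) h0 h0C (Finset.mem_singleton_self _)
    exact (Finset.ne_of_mem_erase hC) this
  constructor
  · intro h
    obtain ⟨C, hC, hC2⟩ := Finset.mem_image.mp h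
    obtain ⟨a, ha⟩ := nonempty_of_mem hπ' (Finset.mem_of_mem_erase hC)
    rcases Fin.eq_zero_or_eq_succ a with rfl | ⟨j, rfl⟩
    · exact hzero C hC ha
    · have : j ∈ downB C := mem_downB.mpr ha
      rw [hC2] at this
      exact Finset.notMem_empty _ this
  · intro j
    obtain ⟨C, ⟨hC, hjC⟩, hCu⟩ := hπ'.2 j.succ
    have hCne : C ≠ {0} := by
      intro h
      exact Fin.succ_ne_zero j (Finset.mem_singleton.mp (h ▸ hjC))
    refine ⟨downB C, ⟨Finset.mem_image_of_mem _ (Finset.mem_erase.mpr ⟨hCne, hC⟩),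
      mem_downB.mpr hjC⟩, ?_⟩
    rintro D ⟨hD, hjD⟩
    obtain ⟨C', hC', rfl⟩ := Finset.mem_image.mp hD
    rw [hCu C' ⟨Finset.mem_of_mem_erase hC', mem_downB.mp hjD⟩]

lemma glue2_image_downB {π : Finset (Finset (Fin n))} {B : Finset (Fin n)} :
    (glue2 π B).image downB = π := by
  unfold glue2
  rw [Finset.image_image]
  exact Finset.image_congr (fun B' _ => downB_gmap B B') |>.trans (Finset.image_id')

lemma glue2_inj {π ρ : Finset (Finset (Fin n))} {B C : Finset (Fin n)}
    (hB : B ∈ π) (hC : C ∈ ρ) (h : glue2 π B = glue2 ρ C) : π = ρ ∧ B = C := by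
  have hBC : B = C := by
    have hmem : gmap C C ∈ glue2 π B := h ▸ Finset.mem_image_of_mem _ hC
    obtain ⟨B', _, hB2⟩ := Finset.mem_image.mp hmem
    have h0 : (0 : Fin (n+1)) ∈ gmap B B' := hB2 ▸ zero_mem_gmap_iff.mpr rfl
    have hB'B : B' = B := zero_mem_gmap_iff.mp h0
    have := congrArg downB hB2
    rw [downB_gmap, downB_gmap] at this
    rw [← this, hB'B]
  refine ⟨?_, hBC⟩
  rw [← glue2_image_downB (π := π) (B := B), h, glue2_image_downB]

lemma glue2_surj {π' : Finset (Finset (Fin (n+1)))} (hπ' : IsSetPartition π') (h0 : {0} ∉ π') :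
    ∃ π B, IsSetPartition π ∧ B ∈ π ∧ glue2 π B = π' := by
  obtain ⟨C₀, ⟨hC₀, h0C₀⟩, hu⟩ := hπ'.2 0
  refine ⟨π'.image downB, downB C₀, ?_, Finset.mem_image_of_mem _ hC₀, ?_⟩
  · constructor
    · intro h
      obtain ⟨C, hC, hC2⟩ := Finset.mem_image.mp h
      have hsub : C ⊆ {0} := by
        intro i hi
        rcases Fin.eq_zero_or_eq_succ i with rfl | ⟨j, rfl⟩
        · exact Finset.mem_singleton_self _
        · have : j ∈ downB C := mem_downB.mpr hi
          rw [hC2] at this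
          exact absurd this (Finset.notMem_empty _)
      obtain ⟨a, ha⟩ := nonempty_of_mem hπ' hC
      have ha0 : a = 0 := Finset.mem_singleton.mp (hsub ha)
      have : C = {0} := Finset.Subset.antisymm hsub
        (Finset.singleton_subset_iff.mpr (ha0 ▸ ha))
      exact h0 (this ▸ hC)
    · intro j
      obtain ⟨C, ⟨hC, hjC⟩, hCu⟩ := hπ'.2 j.succ
      refine ⟨downB C, ⟨Finset.mem_image_of_mem _ hC, mem_downB.mpr hjC⟩, ?_⟩
      rintro D ⟨hD, hjD⟩
      obtain ⟨C', hC', rfl⟩ := Finset.mem_image.mp hD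
      rw [hCu C' ⟨hC', mem_downB.mp hjD⟩]
  · rw [glue2, Finset.image_image]
    have key : ∀ C ∈ π', (gmap (downB C₀) ∘ downB) C = C := by
      intro C hC
      simp only [Function.comp]
      by_cases h0C : (0 : Fin (n+1)) ∈ C
      · have hCC₀ : C = C₀ := hu C ⟨hC, h0C⟩
        subst hCC₀
        rw [gmap, if_pos rfl]
        ext i
        rcases Fin.eq_zero_or_eq_succ i with rfl | ⟨j, rfl⟩
        · simp [h0C]
        · simp [Fin.succ_ne_zero]
      · have hne : downB C ≠ downB C₀ := by
          intro heq
          obtain ⟨a, ha⟩ := nonempty_of_mem hπ' hC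
          rcases Fin.eq_zero_or_eq_succ a with rfl | ⟨j, rfl⟩
          · exact h0C ha
          · have : j ∈ downB C₀ := heq ▸ mem_downB.mpr ha
            have hjC₀ : j.succ ∈ C₀ := mem_downB.mp this
            exact h0C ((block_eq hπ' hC hC₀ ha hjC₀) ▸ h0C₀)
        rw [gmap, if_neg hne, upB_downB h0C]
    exact Finset.image_congr key |>.trans (Finset.image_id')

lemma filter_max_singleton {π : Finset (Finset (Fin n))} (hπ : IsSetPartition π) {B : Finset (Fin n)}
    {i : Fin n} (hB : B ∈ π) (hBi : B.max = (i : WithBot (Fin n))) :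
    π.filter (fun C => C.max = (i : WithBot (Fin n))) = {B} := by
  ext C
  simp only [Finset.mem_filter, Finset.mem_singleton]
  constructor
  · rintro ⟨hC, hCi⟩
    exact block_eq hπ hC hB (Finset.mem_of_max hCi) (Finset.mem_of_max hBi)
  · rintro rfl
    exact ⟨hB, hBi⟩

lemma filter_max_glue0_zero {π : Finset (Finset (Fin n))} :
    (glue0 π).filter (fun C => C.max = ((0 : Fin (n+1)) : WithBot (Fin (n+1)))) = {{0}} := by
  ext C
  simp only [Finset.mem_filter, Finset.mem_singleton, glue0, Finset.mem_insert]
  constructor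
  · rintro ⟨hC | hC, hmax⟩
    · exact hC
    · obtain ⟨B, _, rfl⟩ := Finset.mem_image.mp hC
      exact absurd hmax (max_upB_ne_zero B)
  · rintro rfl
    exact ⟨Or.inl rfl, Finset.max_singleton⟩

lemma filter_max_glue0_succ {π : Finset (Finset (Fin n))} {i : Fin n} :
    (glue0 π).filter (fun C => C.max = (i.succ : WithBot (Fin (n+1)))) =
      (π.filter (fun B => B.max = (i : WithBot (Fin n)))).image upB := by
  ext C
  simp only [Finset.mem_filter, glue0, Finset.mem_insert, Finset.mem_image]
  constructor
  · rintro ⟨rfl | hC, hmax⟩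
    · rw [Finset.max_singleton] at hmax
      exact absurd (WithBot.coe_inj.mp hmax).symm (Fin.succ_ne_zero i)
    · obtain ⟨B, hB, rfl⟩ := hC
      exact ⟨B, ⟨hB, max_upB_eq_succ.mp hmax⟩, rfl⟩
  · rintro ⟨B, ⟨hB, hBi⟩, rfl⟩
    exact ⟨Or.inr ⟨B, hB, rfl⟩, max_upB_eq_succ.mpr hBi⟩

lemma filter_max_glue2_zero {π : Finset (Finset (Fin n))} (hπ : IsSetPartition π) {B : Finset (Fin n)}
    (hB : B ∈ π) :
    (glue2 π B).filter (fun C => C.max = ((0 : Fin (n+1)) : WithBot (Fin (n+1)))) = ∅ := by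
  rw [Finset.filter_eq_empty_iff]
  intro C hC
  obtain ⟨B', hB', rfl⟩ := Finset.mem_image.mp hC
  rw [max_gmap (nonempty_of_mem hπ hB')]
  exact max_upB_ne_zero B'

lemma filter_max_glue2_succ {π : Finset (Finset (Fin n))} (hπ : IsSetPartition π) {B : Finset (Fin n)}
    (hB : B ∈ π) {i : Fin n} :
    (glue2 π B).filter (fun C => C.max = (i.succ : WithBot (Fin (n+1)))) =
      (π.filter (fun B' => B'.max = (i : WithBot (Fin n)))).image (gmap B) := by
  ext C
  simp only [Finset.mem_filter, glue2, Finset.mem_image]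
  constructor
  · rintro ⟨hC, hmax⟩
    obtain ⟨B', hB', rfl⟩ := hC
    rw [max_gmap (nonempty_of_mem hπ hB')] at hmax
    exact ⟨B', ⟨hB', max_upB_eq_succ.mp hmax⟩, rfl⟩
  · rintro ⟨B', ⟨hB', hBi⟩, rfl⟩
    refine ⟨⟨B', hB', rfl⟩, ?_⟩
    rw [max_gmap (nonempty_of_mem hπ hB')]
    exact max_upB_eq_succ.mpr hBi

lemma gmap_injOn {π : Finset (Finset (Fin n))} {B : Finset (Fin n)} :
    Set.InjOn (gmap B) π := by
  intro a _ b _ h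
  have := congrArg downB h
  rwa [downB_gmap, downB_gmap] at this

lemma nest_map {α β N : Type*} [Zero N] (m : N → N → N) (y : β → N) (g : α → β) :
    ∀ L : List α, nest m y (L.map g) = nest m (y ∘ g) L
  | [] => rfl
  | a :: rest => by
    have hemp : (rest.map g).isEmpty = rest.isEmpty := by cases rest <;> rfl
    simp only [List.map_cons, nest, hemp]
    split
    · rfl
    · rw [nest_map m y g rest]; rfl

end KinvAux

namespace KinvAux
open TensorAlgebra

noncomputable def fprod {R : Type*} [Monoid R] {N : ℕ} (f : Fin N → R) : R :=
  ((List.finRange N).map f).prod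

lemma fprod_succ {R : Type*} [Monoid R] {N : ℕ} (f : Fin (N+1) → R) :
    fprod f = f 0 * fprod (f ∘ Fin.succ) := by
  unfold fprod
  rw [List.finRange_succ, List.map_cons, List.prod_cons, List.map_map]

lemma fprod_zero {R : Type*} [MonoidWithZero R] {N : ℕ} {f : Fin N → R} {j : Fin N}
    (h : f j = 0) : fprod f = 0 :=
  List.prod_eq_zero (List.mem_map.mpr ⟨j, List.mem_finRange j, h⟩)

section Alg
variable {k M : Type*} [CommRing k] [AddCommGroup M] [Module k M]
variable (m : M →ₗ[k] M →ₗ[k] M)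

lemma partTerm_eq_fprod {n : ℕ} (y : Fin n → M) (π : Finset (Finset (Fin n))) :
    partTerm m y π = fprod (partFactor m y π) := rfl

lemma counit_ι (x : M) : counit k M (ι k x) = 0 := by
  unfold counit
  rw [TensorAlgebra.lift_ι_apply]
  rfl

lemma deriv_fprod (t : TensorAlgebra k M →ₗ[k] TensorAlgebra k M →ₗ[k] TensorAlgebra k M)
    (hleib : ∀ (x : M) (V W : TensorAlgebra k M),
      t (ι k x) (V * W) = t (ι k x) V * W + V * t (ι k x) W)
    (ht1 : ∀ x : M, t (ι k x) 1 = 0) (x : M) :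
    ∀ {N : ℕ} (f : Fin N → TensorAlgebra k M),
      t (ι k x) (fprod f) = ∑ j : Fin N, fprod (Function.update f j (t (ι k x) (f j))) := by
  intro N
  induction N with
  | zero =>
    intro f
    have : fprod f = 1 := rfl
    rw [this, ht1 x]
    simp
  | succ N ih =>
    intro f
    rw [fprod_succ, hleib, ih (f ∘ Fin.succ), Fin.sum_univ_succ]
    congr 1
    · rw [fprod_succ (Function.update f 0 (t (ι k x) (f 0))), Function.update_self]
      have : Function.update f 0 (t (ι k x) (f 0)) ∘ Fin.succ = f ∘ Fin.succ := by
        funext j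
        exact Function.update_of_ne (Fin.succ_ne_zero j) _ f
      rw [this]
    · rw [Finset.mul_sum]
      refine Finset.sum_congr rfl (fun j _ => ?_)
      rw [fprod_succ (Function.update f j.succ (t (ι k x) (f j.succ))),
        Function.update_of_ne (Ne.symm (Fin.succ_ne_zero j)),
        Function.update_comp_eq_of_injective f (Fin.succ_injective N)]
      rfl

variable {n : ℕ}

lemma partFactor_of_filter_empty {y : Fin n → M} {π : Finset (Finset (Fin n))} {i : Fin n}
    (h : (π.filter fun B => B.max = (i : WithBot (Fin n))) = ∅) :
    partFactor m y π i = 1 := by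
  unfold partFactor
  rw [if_pos h]

lemma partFactor_of_filter_singleton {y : Fin n → M} {π : Finset (Finset (Fin n))} {i : Fin n}
    {B : Finset (Fin n)} (h : (π.filter fun C => C.max = (i : WithBot (Fin n))) = {B}) :
    partFactor m y π i = ι k (nest (fun a b => m a b) y (B.sort (· ≤ ·))) := by
  unfold partFactor
  rw [if_neg (by rw [h]; exact Finset.singleton_ne_empty B), h, Finset.sum_singleton]

lemma partFactor_glue0_zero {y : Fin (n+1) → M} {π : Finset (Finset (Fin n))} :
    partFactor m y (glue0 π) 0 = ι k (y 0) := by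
  rw [partFactor_of_filter_singleton m filter_max_glue0_zero, Finset.sort_singleton]
  rfl

lemma partFactor_image_upB {y : Fin (n+1) → M} {s : Finset (Finset (Fin n))} :
    (if s.image upB = ∅ then (1 : TensorAlgebra k M)
      else ∑ C ∈ s.image upB, ι k (nest (fun a b => m a b) y (C.sort (· ≤ ·)))) =
    (if s = ∅ then 1
      else ∑ B ∈ s, ι k (nest (fun a b => m a b) (y ∘ Fin.succ) (B.sort (· ≤ ·)))) := by
  rcases s.eq_empty_or_nonempty with rfl | hs
  · simp
  · rw [if_neg (by rw [Finset.image_eq_empty]; exact hs.ne_empty), if_neg hs.ne_empty]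
    rw [Finset.sum_image (fun a _ b _ h => upB_inj h)]
    refine Finset.sum_congr rfl (fun B _ => ?_)
    rw [sort_upB, nest_map]

lemma partFactor_glue0_succ {y : Fin (n+1) → M} {π : Finset (Finset (Fin n))} {i : Fin n} :
    partFactor m y (glue0 π) i.succ = partFactor m (y ∘ Fin.succ) π i := by
  unfold partFactor
  rw [filter_max_glue0_succ]
  exact partFactor_image_upB m

lemma partFactor_glue2_zero {y : Fin (n+1) → M} {π : Finset (Finset (Fin n))}
    (hπ : IsSetPartition π) {B : Finset (Fin n)} (hB : B ∈ π) :
    partFactor m y (glue2 π B) 0 = 1 :=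
  partFactor_of_filter_empty m (filter_max_glue2_zero hπ hB)

lemma partFactor_glue2_succ_ne {y : Fin (n+1) → M} {π : Finset (Finset (Fin n))}
    (hπ : IsSetPartition π) {B : Finset (Fin n)} (hB : B ∈ π) {i : Fin n}
    (hne : B.max ≠ (i : WithBot (Fin n))) :
    partFactor m y (glue2 π B) i.succ = partFactor m (y ∘ Fin.succ) π i := by
  unfold partFactor
  rw [filter_max_glue2_succ hπ hB]
  have himg : (π.filter (fun B' => B'.max = (i : WithBot (Fin n)))).image (gmap B) =
      (π.filter (fun B' => B'.max = (i : WithBot (Fin n)))).image upB := by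
    refine Finset.image_congr (fun B' hB' => ?_)
    have : B' ≠ B := by
      rintro rfl
      exact hne (Finset.mem_filter.mp hB').2
    rw [gmap, if_neg this]
  rw [himg]
  exact partFactor_image_upB m

lemma partFactor_glue2_succ_eq {y : Fin (n+1) → M} {π : Finset (Finset (Fin n))}
    (hπ : IsSetPartition π) {B : Finset (Fin n)} (hB : B ∈ π) {i : Fin n}
    (heq : B.max = (i : WithBot (Fin n))) :
    partFactor m y (glue2 π B) i.succ =
      ι k (m (y 0) (nest (fun a b => m a b) (y ∘ Fin.succ) (B.sort (· ≤ ·)))) := by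
  have hfil : (glue2 π B).filter (fun C => C.max = (i.succ : WithBot (Fin (n+1)))) =
      {insert 0 (upB B)} := by
    rw [filter_max_glue2_succ hπ hB, filter_max_singleton hπ hB heq, Finset.image_singleton,
      gmap, if_pos rfl]
  rw [partFactor_of_filter_singleton m hfil]
  congr 1
  have h0 : (0 : Fin (n+1)) ∉ upB B := zero_not_mem_upB
  rw [sort_insert_zero h0]
  have hne : ((upB B).sort (· ≤ ·)).isEmpty = false := by
    cases h : (upB B).sort (· ≤ ·) with
    | nil =>
      exfalso
      have := (sort_eq_nil_iff (upB B)).mp h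
      obtain ⟨a, ha⟩ := nonempty_of_mem hπ hB
      exact Finset.notMem_empty _ (this ▸ succ_mem_upB.mpr ha)
    | cons a l => rfl
  show (if ((upB B).sort (· ≤ ·)).isEmpty then y 0
    else m (y 0) (nest (fun a b => m a b) y ((upB B).sort (· ≤ ·)))) = _
  rw [hne]
  simp only [Bool.false_eq_true, if_false]
  rw [sort_upB, nest_map]

lemma term_glue0 {y : Fin (n+1) → M} {π : Finset (Finset (Fin n))} :
    partTerm m y (glue0 π) = ι k (y 0) * partTerm m (y ∘ Fin.succ) π := by
  rw [partTerm_eq_fprod, partTerm_eq_fprod, fprod_succ, partFactor_glue0_zero]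
  have : partFactor m y (glue0 π) ∘ Fin.succ = partFactor m (y ∘ Fin.succ) π :=
    funext (fun i => partFactor_glue0_succ m)
  rw [this]

section WithT
variable (t : TensorAlgebra k M →ₗ[k] TensorAlgebra k M →ₗ[k] TensorAlgebra k M)

lemma term_glue2 (hbase : ∀ x y : M, t (ι k x) (ι k y) = ι k (m x y)) {y : Fin (n+1) → M} {π : Finset (Finset (Fin n))}
    (hπ : IsSetPartition π) {B : Finset (Fin n)} (hB : B ∈ π) {j : Fin n}
    (hj : B.max = (j : WithBot (Fin n))) :
    partTerm m y (glue2 π B) =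
      fprod (Function.update (partFactor m (y ∘ Fin.succ) π) j
        (t (ι k (y 0)) (partFactor m (y ∘ Fin.succ) π j))) := by
  rw [partTerm_eq_fprod, fprod_succ, partFactor_glue2_zero m hπ hB, one_mul]
  congr 1
  funext i
  show partFactor m y (glue2 π B) i.succ = _
  by_cases hi : i = j
  · subst hi
    rw [Function.update_self, partFactor_glue2_succ_eq m hπ hB hj,
      partFactor_of_filter_singleton m (filter_max_singleton hπ hB hj), hbase]
  · rw [Function.update_of_ne hi]
    refine partFactor_glue2_succ_ne m hπ hB (fun h => hi ?_)
    rw [h] at hj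
    exact (WithBot.coe_inj.mp hj.symm).symm

lemma sum_glue2 (hbase : ∀ x y : M, t (ι k x) (ι k y) = ι k (m x y))
    (ht1 : ∀ x : M, t (ι k x) 1 = 0) {y : Fin (n+1) → M} {π : Finset (Finset (Fin n))} (hπ : IsSetPartition π) :
    ∑ B ∈ π, partTerm m y (glue2 π B) =
      ∑ j : Fin n, fprod (Function.update (partFactor m (y ∘ Fin.succ) π) j
        (t (ι k (y 0)) (partFactor m (y ∘ Fin.succ) π j))) := by
  set F : Fin n → TensorAlgebra k M := fun j =>
    fprod (Function.update (partFactor m (y ∘ Fin.succ) π) j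
      (t (ι k (y 0)) (partFactor m (y ∘ Fin.succ) π j))) with hF
  have hstep : ∀ B ∈ π, partTerm m y (glue2 π B) =
      ∑ j ∈ Finset.univ.filter (fun j : Fin n => B.max = (j : WithBot (Fin n))), F j := by
    intro B hB
    obtain ⟨jB, hjB⟩ := Finset.max_of_nonempty (nonempty_of_mem hπ hB)
    have hfil : Finset.univ.filter (fun j : Fin n => B.max = (j : WithBot (Fin n))) = {jB} := by
      ext j
      simp only [Finset.mem_filter, Finset.mem_univ, true_and, Finset.mem_singleton, hjB]
      exact ⟨fun h => (WithBot.coe_inj.mp h).symm, fun h => by rw [h]⟩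
    rw [hfil, Finset.sum_singleton, hF]
    exact term_glue2 m t hbase hπ hB hjB
  rw [Finset.sum_congr rfl hstep]
  have hswap : ∀ B ∈ π,
      (∑ j ∈ Finset.univ.filter (fun j : Fin n => B.max = (j : WithBot (Fin n))), F j) =
      ∑ j : Fin n, if B.max = (j : WithBot (Fin n)) then F j else 0 :=
    fun B _ => Finset.sum_filter _ _
  rw [Finset.sum_congr rfl hswap, Finset.sum_comm]
  refine Finset.sum_congr rfl (fun j _ => ?_)
  rw [← Finset.sum_filter]
  rcases (π.filter (fun B => B.max = ((j : Fin n) : WithBot (Fin n)))).eq_empty_or_nonempty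
    with h | ⟨B₀, hB₀⟩
  · rw [h, Finset.sum_empty]
    have h1 : partFactor m (y ∘ Fin.succ) π j = 1 := partFactor_of_filter_empty m h
    have : F j = 0 := by
      rw [hF]
      refine fprod_zero (j := j) ?_
      rw [Function.update_self, h1, ht1]
    rw [this]
  · have hfil := filter_max_singleton hπ (Finset.mem_filter.mp hB₀).1 (Finset.mem_filter.mp hB₀).2
    rw [hfil, Finset.sum_singleton]

end WithT

end Alg
end KinvAux


open KinvAux

theorem Kinv_partition_formula {k M : Type*} [CommRing k] [AddCommGroup M] [Module k M]
    (m : M →ₗ[k] M →ₗ[k] M)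
    (t : TensorAlgebra k M →ₗ[k] TensorAlgebra k M →ₗ[k] TensorAlgebra k M)
    (hone : ∀ W, t 1 W = W)
    (hcounit : ∀ U, t U 1 = algebraMap k (TensorAlgebra k M) (counit k M U))
    (hbase : ∀ x y : M, t (ι k x) (ι k y) = ι k (m x y))
    (hleib : ∀ (x : M) (V W : TensorAlgebra k M),
      t (ι k x) (V * W) = t (ι k x) V * W + V * t (ι k x) W)
    (hassoc : ∀ (x : M) (V W : TensorAlgebra k M),
      t (ι k x * V) W = t (ι k x) (t V W) - t (t (ι k x) V) W)
    (K Kinv : TensorAlgebra k M →ₗ[k] TensorAlgebra k M)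
    (hK1 : K 1 = 1)
    (hKι : ∀ y : M, K (ι k y) = ι k y)
    (hKrec : ∀ (y : M) (U : TensorAlgebra k M),
      K (ι k y * U) = ι k y * K U - K (t (ι k y) U))
    (hKinv₁ : ∀ U, Kinv (K U) = U) (hKinv₂ : ∀ U, K (Kinv U) = U) :
    ∀ (n : ℕ) (y : Fin n → M),
      Kinv (((List.finRange n).map (fun i => ι k (y i))).prod) =
        ∑ π ∈ Finset.univ.filter (fun π : Finset (Finset (Fin n)) => IsSetPartition π),
          partTerm m y π := by
  have ht1 : ∀ x : M, t (ι k x) 1 = 0 := by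
    intro x
    rw [hcounit, KinvAux.counit_ι, map_zero]
  have hKinvmul : ∀ (x : M) (U : TensorAlgebra k M),
      Kinv (ι k x * U) = ι k x * Kinv U + t (ι k x) (Kinv U) := by
    intro x U
    have h := hKrec x (Kinv U)
    rw [hKinv₂] at h
    have h2 : K (ι k x * Kinv U + t (ι k x) (Kinv U)) = ι k x * U := by
      rw [map_add, h, sub_add_cancel]
    rw [← h2, hKinv₁]
  intro n
  induction n with
  | zero =>
    intro y
    have h1 : ((List.finRange 0).map fun i => ι k (y i)).prod = 1 := rfl
    rw [h1, ← hK1, hKinv₁]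
    have hset : (Finset.univ.filter (fun π : Finset (Finset (Fin 0)) => IsSetPartition π))
        = {∅} := by
      ext π
      simp only [Finset.mem_filter, Finset.mem_univ, true_and, Finset.mem_singleton]
      constructor
      · intro hπ
        rw [Finset.eq_empty_iff_forall_notMem]
        intro B hB
        have : B = ∅ := Finset.eq_empty_of_forall_notMem (fun i _ => i.elim0)
        exact hπ.1 (this ▸ hB)
      · rintro rfl
        exact ⟨Finset.notMem_empty _, fun i => i.elim0⟩
    rw [hset, Finset.sum_singleton]
    rfl
  | succ n ih =>
    intro y
    have hw : ((List.finRange (n+1)).map fun i => ι k (y i)).prod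
        = ι k (y 0) * ((List.finRange n).map fun i => ι k ((y ∘ Fin.succ) i)).prod := by
      rw [List.finRange_succ, List.map_cons, List.prod_cons, List.map_map]
      rfl
    rw [hw, hKinvmul, ih (y ∘ Fin.succ), map_sum, Finset.mul_sum]
    set P := Finset.univ.filter (fun π : Finset (Finset (Fin n)) => IsSetPartition π) with hP
    set S := Finset.univ.filter
      (fun π : Finset (Finset (Fin (n+1))) => IsSetPartition π) with hS
    have EQ1 : ∑ π ∈ P, ι k (y 0) * partTerm m (y ∘ Fin.succ) π
        = ∑ π' ∈ S.filter (fun π' => {0} ∈ π'), partTerm m y π' := by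
      refine Finset.sum_nbij (i := glue0) ?_ ?_ ?_ ?_
      · intro π hπ
        have hπ' : IsSetPartition π := (Finset.mem_filter.mp hπ).2
        refine Finset.mem_filter.mpr ⟨Finset.mem_filter.mpr ⟨Finset.mem_univ _,
          glue0_isPart hπ'⟩, Finset.mem_insert_self _ _⟩
      · exact fun a _ b _ h => glue0_inj h
      · intro π' hπ'
        simp only [Finset.coe_filter, Set.mem_setOf_eq] at hπ'
        obtain ⟨hπS, h0⟩ := hπ'
        have hpart : IsSetPartition π' := (Finset.mem_filter.mp hπS).2
        refine ⟨inv0 π', ?_, glue0_inv0 hpart h0⟩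
        simp only [Finset.mem_coe, hP, Finset.mem_filter]
        exact ⟨Finset.mem_univ _, inv0_isPart hpart h0⟩
      · intro π hπ
        exact (term_glue0 m).symm
    have EQ2 : ∑ π ∈ P, ∑ B ∈ π, partTerm m y (glue2 π B)
        = ∑ π' ∈ S.filter (fun π' => ¬ ({0} ∈ π')), partTerm m y π' := by
      rw [← Finset.sum_sigma P (fun π => π)
        (fun p => partTerm m y (glue2 p.1 p.2))]
      refine Finset.sum_nbij (i := fun p => glue2 p.1 p.2) ?_ ?_ ?_ ?_
      · rintro ⟨π, B⟩ hp
        obtain ⟨hπ, hB⟩ := Finset.mem_sigma.mp hp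
        have hπ' : IsSetPartition π := (Finset.mem_filter.mp hπ).2
        exact Finset.mem_filter.mpr ⟨Finset.mem_filter.mpr ⟨Finset.mem_univ _,
          glue2_isPart hπ' hB⟩, singleton_zero_not_mem_glue2 hπ' hB⟩
      · rintro ⟨π, B⟩ hp ⟨ρ, C⟩ hq h
        obtain ⟨hπ, hB⟩ := Finset.mem_sigma.mp hp
        obtain ⟨hρ, hC⟩ := Finset.mem_sigma.mp hq
        obtain ⟨h1, h2⟩ := glue2_inj hB hC h
        subst h1; subst h2; rfl
      · intro π' hπ'
        simp only [Finset.coe_filter, Set.mem_setOf_eq] at hπ'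
        obtain ⟨hπS, h0⟩ := hπ'
        have hpart : IsSetPartition π' := (Finset.mem_filter.mp hπS).2
        obtain ⟨π, B, hπ, hB, heq⟩ := glue2_surj hpart h0
        refine ⟨⟨π, B⟩, ?_, heq⟩
        simp only [Finset.mem_coe, Finset.mem_sigma, hP, Finset.mem_filter]
        exact ⟨⟨Finset.mem_univ _, hπ⟩, hB⟩
      · intro p hp
        rfl
    have EQ3 : ∀ π ∈ P, t (ι k (y 0)) (partTerm m (y ∘ Fin.succ) π)
        = ∑ B ∈ π, partTerm m y (glue2 π B) := by
      intro π hπ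
      have hπ' : IsSetPartition π := (Finset.mem_filter.mp hπ).2
      rw [partTerm_eq_fprod, deriv_fprod t hleib ht1 (y 0) (partFactor m (y ∘ Fin.succ) π),
        sum_glue2 m t hbase ht1 hπ']
    rw [Finset.sum_congr rfl EQ3, EQ1, EQ2,
      Finset.sum_filter_add_sum_filter_not S (fun π' => {0} ∈ π') (partTerm m y)]
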